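/- Let a ∈ ℝ be algebraic over ℚ with minimal integer polynomial of degree K and associated maps Ψ_K^J. Then ε(a) = inf{ ε ∈ ℝ : for every J ∈ ℕ and every w ∈ ℝ^{J+1}, the set Ψ_K^J·[0,ε]^{K+J+1} + w contains a point of ℤ^{J+1} }, where Ψ_K^J·[0,ε]^{K+J+1} denotes the image of the cube [0,ε]^{K+J+1} under Ψ_K^J. -/

import Mathlib

noncomputable section

/-- The Toeplitz band map Ψ_K^J : ℝ^{K+J+1} → ℝ^{J+1},
(Ψ_K^J t)_i = Σ_{j=0}^K α_j·t_{i+j}. -/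
def Psi (K J : ℕ) (α : Fin (K + 1) → ℤ) (t : Fin (K + J + 1) → ℝ) : Fin (J + 1) → ℝ :=
  fun i => ∑ j : Fin (K + 1), (α j : ℝ) * t ⟨i.1 + j.1, by omega⟩

/-- ε(a) = inf{ε : for every J and every v ∈ ℝ^{K+J+1}, the cube [0,ε]^{K+J+1} meets
P_K^J + v + ℤ^{K+J+1}}, where P_K^J = ker Ψ_K^J and α is the coefficient vector of the
minimal integer polynomial of a. -/
noncomputable def epsA (K : ℕ) (α : Fin (K + 1) → ℤ) : ℝ :=
  sInf {ε : ℝ | ∀ J : ℕ, ∀ v : Fin (K + J + 1) → ℝ,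
    ∃ x ∈ Set.Icc (0 : Fin (K + J + 1) → ℝ) (fun _ => ε),
      ∃ p : Fin (K + J + 1) → ℝ, Psi K J α p = 0 ∧
        ∃ z : Fin (K + J + 1) → ℤ, x = p + v + fun i => (z i : ℝ)}

/-! ### Auxiliary machinery -/

/-- Generic "banded Toeplitz row sum" over ℕ-indexed sequences. -/
def rowSum {R : Type*} [CommRing R] (K : ℕ) (β : ℕ → R) (f : ℕ → R) (i : ℕ) : R :=
  ∑ j ∈ Finset.range (K + 1), β j * f (i + j)

lemma rowSum_add {R : Type*} [CommRing R] (K : ℕ) (β f g : ℕ → R) (i : ℕ) :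
    rowSum K β (fun n => f n + g n) i = rowSum K β f i + rowSum K β g i := by
  simp [rowSum, mul_add, Finset.sum_add_distrib]

lemma rowSum_neg {R : Type*} [CommRing R] (K : ℕ) (β f : ℕ → R) (i : ℕ) :
    rowSum K β (fun n => -f n) i = -rowSum K β f i := by
  simp [rowSum]

lemma rowSum_cast {R : Type*} [CommRing R] (K : ℕ) (β : ℕ → ℤ) (f : ℕ → ℤ) (i : ℕ) :
    ((rowSum K β f i : ℤ) : R) = rowSum K (fun j => (β j : R)) (fun n => (f n : R)) i := by
  simp [rowSum]

/-- Back-substitution solver used over fields. -/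
noncomputable def urec {F : Type*} [Field F] (K m N : ℕ) (β : ℕ → F) (c : ℕ → F) : ℕ → F
  | i => (β m)⁻¹ * (c (N - i) - ∑ d ∈ (Finset.range (K - m)).attach,
      if _h : d.1 + 1 ≤ i then β (m + d.1 + 1) * urec K m N β c (i - (d.1 + 1)) else 0)
  decreasing_by omega

lemma urec_eq {F : Type*} [Field F] (K m N : ℕ) (β : ℕ → F) (c : ℕ → F) (i : ℕ) :
    urec K m N β c i = (β m)⁻¹ * (c (N - i) - ∑ d ∈ Finset.range (K - m),
      if d + 1 ≤ i then β (m + d + 1) * urec K m N β c (i - (d + 1)) else 0) := by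
  rw [urec]
  congr 2
  rw [← Finset.sum_attach (Finset.range (K - m))
    (fun d => if d + 1 ≤ i then β (m + d + 1) * urec K m N β c (i - (d + 1)) else 0)]
  exact Finset.sum_congr rfl (fun d _ => by split <;> simp_all)

/-- If β has a nonzero entry at some minimal index m ≤ K, then any finite window of
row-sum targets can be achieved over a field. -/
lemma fieldSolve {F : Type*} [Field F] (K : ℕ) (β : ℕ → F) (m : ℕ) (hmK : m ≤ K)
    (hm : β m ≠ 0) (hlow : ∀ j, j < m → β j = 0) (N : ℕ) (c : ℕ → F) :
    ∃ f : ℕ → F, ∀ i ≤ N, rowSum K β f i = c i := by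
  set u := urec K m N β c with hu_def
  set f : ℕ → F := fun s => if m ≤ s ∧ s ≤ m + N then u (m + N - s) else 0 with hf_def
  refine ⟨f, ?_⟩
  intro i hi
  have hf1 : f (i + m) = u (N - i) := by
    rw [hf_def]; simp only
    rw [if_pos ⟨by omega, by omega⟩]
    congr 1; omega
  have hterm : ∀ d, β (m + (d + 1)) * f (i + (m + (d + 1)))
      = if d + 1 ≤ N - i then β (m + d + 1) * u (N - i - (d + 1)) else 0 := by
    intro d
    rw [hf_def]; simp only
    by_cases hc : d + 1 ≤ N - i
    · rw [if_pos ⟨by omega, by omega⟩, if_pos hc]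
      congr 2
      omega
    · rw [if_neg (by rintro ⟨h1, h2⟩; omega), if_neg hc, mul_zero]
  have hsplit : rowSum K β f i = ∑ j ∈ Finset.Ico m (K + 1), β j * f (i + j) := by
    rw [rowSum, Finset.range_eq_Ico,
      ← Finset.sum_Ico_consecutive _ (Nat.zero_le m) (by omega : m ≤ K + 1)]
    have hz : ∑ j ∈ Finset.Ico 0 m, β j * f (i + j) = 0 :=
      Finset.sum_eq_zero (fun j hj => by rw [hlow j (Finset.mem_Ico.mp hj).2, zero_mul])
    rw [hz, zero_add]
  rw [hsplit, Finset.sum_Ico_eq_sum_range]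
  have hKm : K + 1 - m = (K - m) + 1 := by omega
  rw [hKm, Finset.sum_range_succ']
  simp only [Nat.add_zero]
  rw [hf1, Finset.sum_congr rfl (fun d _ => hterm d)]
  rw [hu_def, urec_eq, ← hu_def, mul_inv_cancel_left₀ hm]
  have : N - (N - i) = i := by omega
  rw [this]
  ring

/-- Back-substitution solver over ℤ, up to a power of the leading coefficient. -/
noncomputable def hrec (K : ℕ) (β : ℕ → ℤ) (c : ℕ → ℤ) : ℕ → ℤ
  | i => β K ^ i * c i - ∑ j ∈ (Finset.range K).attach,
      if _h : K ≤ i + j.1 then β j.1 * β K ^ (K - j.1 - 1) * hrec K β c (i + j.1 - K) else 0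
  decreasing_by
    have := Finset.mem_range.mp j.2
    omega

lemma hrec_eq (K : ℕ) (β : ℕ → ℤ) (c : ℕ → ℤ) (i : ℕ) :
    hrec K β c i = β K ^ i * c i - ∑ j ∈ Finset.range K,
      if K ≤ i + j then β j * β K ^ (K - j - 1) * hrec K β c (i + j - K) else 0 := by
  rw [hrec]
  congr 1
  rw [← Finset.sum_attach (Finset.range K)
    (fun j => if K ≤ i + j then β j * β K ^ (K - j - 1) * hrec K β c (i + j - K) else 0)]
  exact Finset.sum_congr rfl (fun d _ => by split <;> simp_all)

/-- Over ℤ, any window of targets scaled by `β K ^ (N+1)` is achievable. -/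
lemma intPow (K : ℕ) (β : ℕ → ℤ) (N : ℕ) (c : ℕ → ℤ) :
    ∃ f : ℕ → ℤ, ∀ i ≤ N, rowSum K β f i = β K ^ (N + 1) * c i := by
  set h := hrec K β c with hh_def
  set f : ℕ → ℤ := fun s => if K ≤ s ∧ s - K ≤ N then β K ^ (N - (s - K)) * h (s - K) else 0
    with hf_def
  refine ⟨f, ?_⟩
  intro i hi
  have hfK : f (i + K) = β K ^ (N - i) * h i := by
    rw [hf_def]; simp only
    rw [if_pos ⟨by omega, by omega⟩]
    congr 2 <;> omega
  have hterm : ∀ j, j < K → β j * f (i + j)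
      = if K ≤ i + j then β j * β K ^ (N - (i + j - K)) * h (i + j - K) else 0 := by
    intro j hj
    rw [hf_def]; simp only
    by_cases hc : K ≤ i + j
    · rw [if_pos ⟨hc, by omega⟩, if_pos hc]
      ring
    · rw [if_neg (by rintro ⟨h1, h2⟩; omega), if_neg hc, mul_zero]
  have hfK' : β K * f (i + K) = β K ^ (N - i + 1) * h i := by
    rw [hfK]; ring
  have hterm2 : ∀ j ∈ Finset.range K, β K ^ (N - i + 1) *
      (if K ≤ i + j then β j * β K ^ (K - j - 1) * h (i + j - K) else 0)
      = if K ≤ i + j then β j * β K ^ (N - (i + j - K)) * h (i + j - K) else 0 := by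
    intro j hj
    have hj' := Finset.mem_range.mp hj
    by_cases hc : K ≤ i + j
    · rw [if_pos hc, if_pos hc, show N - (i + j - K) = (N - i + 1) + (K - j - 1) from by omega,
        pow_add]
      ring
    · rw [if_neg hc, if_neg hc, mul_zero]
  have hhi := hrec_eq K β c i
  rw [← hh_def] at hhi
  rw [rowSum, Finset.sum_range_succ, hfK',
    Finset.sum_congr rfl (fun j hj => hterm j (Finset.mem_range.mp hj)),
    hhi, mul_sub, Finset.mul_sum, Finset.sum_congr rfl hterm2,
    show β K ^ (N - i + 1) * (β K ^ i * c i) = β K ^ (N + 1) * c i from by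
      rw [← mul_assoc, ← pow_add, show N - i + 1 + i = N + 1 from by omega]]
  ring

/-- The descent: a subgroup of ℤ^k which is "dense mod every prime" and contains
M • everything is everything. -/
lemma descent {k : ℕ} : ∀ M : ℕ, 0 < M → ∀ S : AddSubgroup (Fin k → ℤ),
    (∀ p : ℕ, p.Prime → ∀ c : Fin k → ℤ, ∃ s ∈ S, ∀ i, (p : ℤ) ∣ c i - s i) →
    (∀ c, M • c ∈ S) → ∀ c, c ∈ S := by
  intro M
  induction M using Nat.strong_induction_on with
  | _ M ih =>
    intro hM S hF2 hF1 c
    rcases eq_or_ne M 1 with rfl | hM1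
    · simpa using hF1 c
    · obtain ⟨p, hp, hpd⟩ := Nat.exists_prime_and_dvd hM1
      set φ : (Fin k → ℤ) →+ (Fin k → ℤ) :=
        AddMonoidHom.mk' (fun x => p • x) (fun a b => smul_add p a b) with hφ
      set S' := S.comap φ with hS'
      have hS'sub : ∀ x ∈ S, x ∈ S' := by
        intro x hx
        simp only [hS', AddSubgroup.mem_comap]
        show p • x ∈ S
        exact AddSubgroup.nsmul_mem S hx p
      have hS'F2 : ∀ q : ℕ, q.Prime → ∀ c : Fin k → ℤ, ∃ s ∈ S', ∀ i, (q : ℤ) ∣ c i - s i := by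
        intro q hq c
        obtain ⟨s, hsS, hdvd⟩ := hF2 q hq c
        exact ⟨s, hS'sub s hsS, hdvd⟩
      have hS'F1 : ∀ c, (M / p) • c ∈ S' := by
        intro c
        simp only [hS', AddSubgroup.mem_comap]
        show p • ((M / p) • c) ∈ S
        rw [smul_smul, Nat.mul_div_cancel' hpd]
        exact hF1 c
      have hlt : M / p < M := Nat.div_lt_self hM hp.one_lt
      have hpos : 0 < M / p := Nat.div_pos (Nat.le_of_dvd hM hpd) hp.pos
      have hAll : ∀ c, c ∈ S' := ih (M / p) hlt hpos S' hS'F2 hS'F1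
      obtain ⟨s, hsS, hdvd⟩ := hF2 p hp c
      have hc' : c = s + p • (fun i => (c i - s i) / p) := by
        funext i
        have h2 := Int.ediv_mul_cancel (hdvd i)
        have h3 : (p • fun i => (c i - s i) / (p : ℤ)) i = (p : ℤ) * ((c i - s i) / (p : ℤ)) := by
          simp [Pi.smul_apply]
        rw [Pi.add_apply, h3]
        linear_combination -h2
      rw [hc']
      exact S.add_mem hsS (hAll (fun i => (c i - s i) / p))

/-- The coefficient sequence extended to ℕ by zero. -/
def Ac (K : ℕ) (α : Fin (K + 1) → ℤ) : ℕ → ℤ := fun j => if h : j < K + 1 then α ⟨j, h⟩ else 0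

lemma Ac_lt {K : ℕ} (α : Fin (K + 1) → ℤ) {j : ℕ} (h : j < K + 1) : Ac K α j = α ⟨j, h⟩ := by
  rw [Ac, dif_pos h]

lemma Ac_top {K : ℕ} (α : Fin (K + 1) → ℤ) : Ac K α K = α (Fin.last K) :=
  Ac_lt α (Nat.lt_succ_self K)

/-- Bridge between `Psi` and `rowSum`. -/
lemma psi_eq {K J : ℕ} (α : Fin (K + 1) → ℤ) (t : Fin (K + J + 1) → ℝ) (f : ℕ → ℝ)
    (hf : ∀ s : Fin (K + J + 1), f s.1 = t s) (i : Fin (J + 1)) :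
    Psi K J α t i = rowSum K (fun j => ((Ac K α j : ℤ) : ℝ)) f i.1 := by
  rw [Psi, rowSum, ← Fin.sum_univ_eq_sum_range
    (fun j => ((Ac K α j : ℤ) : ℝ) * f (i.1 + j)) (K + 1)]
  refine Finset.sum_congr rfl (fun j _ => ?_)
  rw [Ac_lt α j.isLt, Fin.eta, hf ⟨i.1 + j.1, by omega⟩]

lemma psi_add {K J : ℕ} (α : Fin (K + 1) → ℤ) (x y : Fin (K + J + 1) → ℝ) (i : Fin (J + 1)) :
    Psi K J α (x + y) i = Psi K J α x i + Psi K J α y i := by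
  simp [Psi, mul_add, Finset.sum_add_distrib]

lemma psi_sub {K J : ℕ} (α : Fin (K + 1) → ℤ) (x y : Fin (K + J + 1) → ℝ) (i : Fin (J + 1)) :
    Psi K J α (x - y) i = Psi K J α x i - Psi K J α y i := by
  simp [Psi, mul_sub, Finset.sum_sub_distrib]

/-- Integer version of `Psi` on `Fin` vectors. -/
def PsiZF (K J : ℕ) (α : Fin (K + 1) → ℤ) (z : Fin (K + J + 1) → ℤ) : Fin (J + 1) → ℤ :=
  fun i => ∑ j : Fin (K + 1), α j * z ⟨i.1 + j.1, by omega⟩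

lemma psi_intCast {K J : ℕ} (α : Fin (K + 1) → ℤ) (z : Fin (K + J + 1) → ℤ) (i : Fin (J + 1)) :
    Psi K J α (fun s => (z s : ℝ)) i = ((PsiZF K J α z i : ℤ) : ℝ) := by
  rw [Psi, PsiZF]
  push_cast
  rfl

/-- Key number-theoretic input: with gcd 1 coefficients, the integer band map is surjective. -/
lemma intSurj {K J : ℕ} (α : Fin (K + 1) → ℤ) (hlead : 0 < α (Fin.last K))
    (hprim : Finset.univ.gcd α = 1) (c : Fin (J + 1) → ℤ) :
    ∃ f : ℕ → ℤ, ∀ i : Fin (J + 1), rowSum K (Ac K α) f i.1 = c i := by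
  set S : AddSubgroup (Fin (J + 1) → ℤ) :=
    { carrier := {c | ∃ f : ℕ → ℤ, ∀ i : Fin (J + 1), rowSum K (Ac K α) f i.1 = c i}
      add_mem' := by
        rintro a b ⟨fa, hfa⟩ ⟨fb, hfb⟩
        exact ⟨fun n => fa n + fb n, fun i => by
          rw [rowSum_add, hfa i, hfb i]; rfl⟩
      zero_mem' := ⟨fun _ => 0, fun i => by simp [rowSum]⟩
      neg_mem' := by
        rintro a ⟨fa, hfa⟩
        exact ⟨fun n => -fa n, fun i => by rw [rowSum_neg, hfa i]; rfl⟩ } with hS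
  have hαK : 0 < Ac K α K := by rw [Ac_top]; exact hlead
  set M : ℕ := (Ac K α K).toNat ^ (J + 1) with hM
  have hMpos : 0 < M := pow_pos (by omega) _
  have hMcast : (M : ℤ) = Ac K α K ^ (J + 1) := by
    rw [hM]
    push_cast [Int.toNat_of_nonneg hαK.le]
    rfl
  have hF1 : ∀ c : Fin (J + 1) → ℤ, M • c ∈ S := by
    intro c
    obtain ⟨f, hf⟩ := intPow K (Ac K α) J (fun n => if h : n < J + 1 then c ⟨n, h⟩ else 0)
    refine ⟨f, fun i => ?_⟩
    rw [hf i.1 (by omega)]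
    simp only [Pi.smul_apply, nsmul_eq_mul, dif_pos i.isLt, Fin.eta]
    rw [hMcast]
  have hF2 : ∀ p : ℕ, p.Prime → ∀ c : Fin (J + 1) → ℤ, ∃ s ∈ S, ∀ i, (p : ℤ) ∣ c i - s i := by
    intro p hp c
    haveI : Fact p.Prime := ⟨hp⟩
    set β : ℕ → ZMod p := fun j => ((Ac K α j : ℤ) : ZMod p) with hβ
    have hex : ∃ j, j ≤ K ∧ β j ≠ 0 := by
      by_contra hcon
      push_neg at hcon
      have hdvd : ∀ i : Fin (K + 1), (p : ℤ) ∣ α i := by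
        intro i
        have h0 : β i.1 = 0 := hcon i.1 (by omega)
        rw [hβ] at h0
        simp only at h0
        rw [Ac_lt α i.isLt, Fin.eta] at h0
        exact (ZMod.intCast_zmod_eq_zero_iff_dvd _ p).mp h0
      have hd1 : (p : ℤ) ∣ Finset.univ.gcd α := Finset.dvd_gcd (fun i _ => hdvd i)
      rw [hprim] at hd1
      have hd2 : (p : ℕ) ∣ 1 := by exact_mod_cast hd1
      have h3 := Nat.le_of_dvd one_pos hd2
      have := hp.one_lt
      omega
    classical
    set m := Nat.find hex with hm_def
    have hmspec := Nat.find_spec hex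
    have hmin : ∀ j, j < m → β j = 0 := by
      intro j hj
      by_contra hne
      exact Nat.find_min hex hj ⟨by omega, hne⟩
    obtain ⟨fbar, hfbar⟩ := fieldSolve K β m hmspec.1 hmspec.2 hmin J
        (fun n => ((if h : n < J + 1 then c ⟨n, h⟩ else (0 : ℤ) : ℤ) : ZMod p))
    set f : ℕ → ℤ := fun n => ((fbar n).val : ℤ) with hf_def
    refine ⟨fun i => rowSum K (Ac K α) f i.1, ⟨f, fun i => rfl⟩, ?_⟩
    intro i
    rw [← ZMod.intCast_zmod_eq_zero_iff_dvd]
    have hcast : ((rowSum K (Ac K α) f i.1 : ℤ) : ZMod p) = rowSum K β fbar i.1 := by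
      rw [rowSum_cast]
      refine Finset.sum_congr rfl (fun j _ => ?_)
      congr 1
      rw [hf_def]
      push_cast
      rw [ZMod.natCast_val, ZMod.cast_id]
    push_cast
    rw [hcast, hfbar i.1 (by omega)]
    simp [dif_pos i.isLt, Fin.is_le]
  exact descent M hMpos S hF2 hF1 c

/-- Real solvability of the band system (the leading coefficient is nonzero). -/
lemma realSolve {K : ℕ} (α : Fin (K + 1) → ℤ) (hlead : 0 < α (Fin.last K)) (N : ℕ) (c : ℕ → ℝ) :
    ∃ f : ℕ → ℝ, ∀ i ≤ N, rowSum K (fun j => ((Ac K α j : ℤ) : ℝ)) f i = c i := by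
  classical
  set β : ℕ → ℝ := fun j => ((Ac K α j : ℤ) : ℝ) with hβ
  have hK : β K ≠ 0 := by
    rw [hβ]
    simp only
    rw [Ac_top]
    exact_mod_cast hlead.ne'
  have hex : ∃ j, β j ≠ 0 := ⟨K, hK⟩
  set m := Nat.find hex with hm_def
  have hmspec : β m ≠ 0 := Nat.find_spec hex
  have hmK : m ≤ K := Nat.find_min' hex hK
  have hmin : ∀ j, j < m → β j = 0 := by
    intro j hj
    by_contra hne
    exact Nat.find_min hex hj hne
  exact fieldSolve K β m hmK hmspec hmin N c

/-- ε(a) equals the infimum of the ε such that for every J and every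
w ∈ ℝ^{J+1}, the set Ψ_K^J·[0,ε]^{K+J+1} + w contains an integer point. -/
theorem stmt11 (a : ℝ) (K : ℕ) (α : Fin (K + 1) → ℤ)
    (halg : IsAlgebraic ℚ a) (hdeg : (minpoly ℚ a).natDegree = K)
    (hroot : ∑ i : Fin (K + 1), (α i : ℝ) * a ^ (i : ℕ) = 0)
    (hlead : 0 < α (Fin.last K))
    (hprim : Finset.univ.gcd α = 1) :
    epsA K α = sInf {ε : ℝ | ∀ J : ℕ, ∀ w : Fin (J + 1) → ℝ,
      ∃ x ∈ Set.Icc (0 : Fin (K + J + 1) → ℝ) (fun _ => ε),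
        ∃ z : Fin (J + 1) → ℤ, Psi K J α x + w = fun i => (z i : ℝ)} := by
  have hsets : {ε : ℝ | ∀ J : ℕ, ∀ v : Fin (K + J + 1) → ℝ,
      ∃ x ∈ Set.Icc (0 : Fin (K + J + 1) → ℝ) (fun _ => ε),
        ∃ p : Fin (K + J + 1) → ℝ, Psi K J α p = 0 ∧
          ∃ z : Fin (K + J + 1) → ℤ, x = p + v + fun i => (z i : ℝ)}
      = {ε : ℝ | ∀ J : ℕ, ∀ w : Fin (J + 1) → ℝ,
      ∃ x ∈ Set.Icc (0 : Fin (K + J + 1) → ℝ) (fun _ => ε),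
        ∃ z : Fin (J + 1) → ℤ, Psi K J α x + w = fun i => (z i : ℝ)} := by
    ext ε
    simp only [Set.mem_setOf_eq]
    constructor
    · intro h1 J w
      obtain ⟨f, hf⟩ := realSolve α hlead J (fun n => -(if h : n < J + 1 then w ⟨n, h⟩ else 0))
      set v : Fin (K + J + 1) → ℝ := fun s => f s.1 with hv
      have hPsiv : ∀ i : Fin (J + 1), Psi K J α v i = -(w i) := by
        intro i
        rw [psi_eq α v f (fun s => rfl) i, hf i.1 (by omega), dif_pos i.isLt, Fin.eta]
      obtain ⟨x, hx, p, hp, z, hxz⟩ := h1 J v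
      refine ⟨x, hx, PsiZF K J α z, ?_⟩
      funext i
      have hsplit : Psi K J α x i
          = Psi K J α p i + Psi K J α v i + Psi K J α (fun s => (z s : ℝ)) i := by
        rw [hxz, psi_add, psi_add]
      rw [Pi.add_apply, hsplit, hp, Pi.zero_apply, hPsiv i, psi_intCast]
      ring
    · intro h2 J v
      obtain ⟨x, hx, z, hxz⟩ := h2 J (fun i => -(Psi K J α v i))
      have hxv : ∀ i : Fin (J + 1), Psi K J α x i - Psi K J α v i = (z i : ℝ) := by
        intro i
        have := congrFun hxz i
        simp only [Pi.add_apply] at this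
        linarith [this]
      obtain ⟨fz, hfz⟩ := intSurj α hlead hprim z
      set tF : Fin (K + J + 1) → ℤ := fun s => fz s.1 with htF
      have hPsit : ∀ i : Fin (J + 1), Psi K J α (fun s => ((tF s : ℤ) : ℝ)) i = (z i : ℝ) := by
        intro i
        rw [psi_eq α _ (fun n => ((fz n : ℤ) : ℝ)) (fun s => rfl) i, ← rowSum_cast, hfz i]
      refine ⟨x, hx, x - v - (fun s => ((tF s : ℤ) : ℝ)), ?_, tF, ?_⟩
      · funext i
        rw [psi_sub, psi_sub, hPsit i, hxv i, Pi.zero_apply, sub_self]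
      · funext s
        simp only [Pi.add_apply, Pi.sub_apply]
        ring
  rw [epsA, hsets]
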